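/- Fractal Taylor series: let h : F → ℝ be bounded and F^α-differentiable any number of times with (D_F^α)^k h bounded for every integer k > 0, and suppose g = φ[h] satisfies the ordinary Taylor expansion g(u) = Σ_{k=0}^∞ ((u − y)^k / k!)·g^{(k)}(y) for all u, y ∈ [S_F^α(a), S_F^α(b)]. Then for all θ, θ' ∈ C(a,b) = w([a,b]): h(θ) = Σ_{k=0}^∞ ((J(θ) − J(θ'))^k / k!)·((D_F^α)^k h)(θ'). -/

import Mathlib

open Set
open scoped ENNReal

structure Subdivision (a b : ℝ) where
  k : ℕ
  t : ℕ → ℝ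
  first : t 0 = a
  last : t k = b
  mono : ∀ i < k, t i < t (i + 1)

def Subdivision.MeshLE {a b : ℝ} (P : Subdivision a b) (δ : ℝ) : Prop :=
  ∀ i < P.k, P.t (i + 1) - P.t i ≤ δ

noncomputable def sigmaSum {n : ℕ} (α : ℝ) (w : ℝ → EuclideanSpace ℝ (Fin n))
    {a b : ℝ} (P : Subdivision a b) : ℝ :=
  (∑ i ∈ Finset.range P.k, ‖w (P.t (i + 1)) - w (P.t i)‖ ^ α) / Real.Gamma (α + 1)

noncomputable def gammaDelta {n : ℕ} (α : ℝ) (w : ℝ → EuclideanSpace ℝ (Fin n))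
    (a b δ : ℝ) : ℝ≥0∞ :=
  ⨅ (P : Subdivision a b) (_ : P.MeshLE δ), ENNReal.ofReal (sigmaSum α w P)

noncomputable def massFn {n : ℕ} (α : ℝ) (w : ℝ → EuclideanSpace ℝ (Fin n))
    (a b : ℝ) : ℝ≥0∞ :=
  ⨆ (δ : ℝ) (_ : 0 < δ), gammaDelta α w a b δ

/-- The staircase (rise) function S_F^α(t) = γ^α(F,a₀,t). -/
noncomputable def SF {n : ℕ} (α : ℝ) (w : ℝ → EuclideanSpace ℝ (Fin n))
    (a₀ : ℝ) (t : ℝ) : ℝ :=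
  (massFn α w a₀ t).toReal

/-- `l` is the F-limit of `f` as θ' → θ through points of `F`. -/
def IsFLimit {n : ℕ} (F : Set (EuclideanSpace ℝ (Fin n)))
    (f : EuclideanSpace ℝ (Fin n) → ℝ) (θ : EuclideanSpace ℝ (Fin n)) (l : ℝ) : Prop :=
  ∀ ε > (0 : ℝ), ∃ δ > (0 : ℝ), ∀ θ' ∈ F, θ' ≠ θ → ‖θ' - θ‖ < δ → |f θ' - l| < ε

/-- `f` is F-continuous at θ. -/
def FContinuousAt {n : ℕ} (F : Set (EuclideanSpace ℝ (Fin n)))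
    (f : EuclideanSpace ℝ (Fin n) → ℝ) (θ : EuclideanSpace ℝ (Fin n)) : Prop :=
  IsFLimit F f θ (f θ)

/-- The F^α-derivative of `f` at θ is `l`:
l = F-lim_{θ'→θ} (f(θ') − f(θ))/(J(θ') − J(θ)). -/
def HasFAlphaDerivAt {n : ℕ} (F : Set (EuclideanSpace ℝ (Fin n)))
    (J : EuclideanSpace ℝ (Fin n) → ℝ) (f : EuclideanSpace ℝ (Fin n) → ℝ)
    (θ : EuclideanSpace ℝ (Fin n)) (l : ℝ) : Prop :=
  IsFLimit F (fun θ' => (f θ' - f θ) / (J θ' - J θ)) θ l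

/-- Upper F^α-sum U^α[f,F,P] of `f` over the subdivision `P`. -/
noncomputable def upperFSum {n : ℕ} (α : ℝ) (w : ℝ → EuclideanSpace ℝ (Fin n))
    (a₀ : ℝ) (f : EuclideanSpace ℝ (Fin n) → ℝ) {a b : ℝ} (P : Subdivision a b) : ℝ :=
  ∑ i ∈ Finset.range P.k,
    sSup (f '' (w '' Icc (P.t i) (P.t (i + 1)))) *
      (SF α w a₀ (P.t (i + 1)) - SF α w a₀ (P.t i))

/-- Lower F^α-sum L^α[f,F,P] of `f` over the subdivision `P`. -/
noncomputable def lowerFSum {n : ℕ} (α : ℝ) (w : ℝ → EuclideanSpace ℝ (Fin n))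
    (a₀ : ℝ) (f : EuclideanSpace ℝ (Fin n) → ℝ) {a b : ℝ} (P : Subdivision a b) : ℝ :=
  ∑ i ∈ Finset.range P.k,
    sInf (f '' (w '' Icc (P.t i) (P.t (i + 1)))) *
      (SF α w a₀ (P.t (i + 1)) - SF α w a₀ (P.t i))

/-- `f` is F^α-integrable on C(a,b) with integral `v`:
inf of upper sums = sup of lower sums = v. -/
def HasFIntegral {n : ℕ} (α : ℝ) (w : ℝ → EuclideanSpace ℝ (Fin n)) (a₀ : ℝ)
    (f : EuclideanSpace ℝ (Fin n) → ℝ) (a b : ℝ) (v : ℝ) : Prop :=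
  sInf (Set.range fun P : Subdivision a b => upperFSum α w a₀ f P) = v ∧
  sSup (Set.range fun P : Subdivision a b => lowerFSum α w a₀ f P) = v


open Filter Topology

section FTSAux

lemma Subdivision.t_le {a b : ℝ} (P : Subdivision a b) {i j : ℕ} (hij : i ≤ j) (hj : j ≤ P.k) :
    P.t i ≤ P.t j := by
  induction j, hij using Nat.le_induction with
  | base => exact le_rfl
  | succ j hij ih => exact le_trans (ih (by omega)) (P.mono j (by omega)).le

lemma Subdivision.t_mem {a b : ℝ} (P : Subdivision a b) {i : ℕ} (hi : i ≤ P.k) :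
    P.t i ∈ Icc a b := by
  constructor
  · have h := P.t_le (Nat.zero_le i) hi; rwa [P.first] at h
  · have h := P.t_le hi le_rfl; rwa [P.last] at h

def Subdivision.concat {a b c : ℝ} (P : Subdivision a b) (Q : Subdivision b c) :
    Subdivision a c where
  k := P.k + Q.k
  t i := if i ≤ P.k then P.t i else Q.t (i - P.k)
  first := by simp [P.first]
  last := by
    by_cases h : P.k + Q.k ≤ P.k
    · have hq : Q.k = 0 := by omega
      simp only [if_pos h]
      have heq : P.k + Q.k = P.k := by omega
      have h2 := Q.last
      rw [hq] at h2
      rw [heq, P.last]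
      exact Q.first.symm.trans h2
    · simp only [if_neg h, Nat.add_sub_cancel_left, Q.last]
  mono := by
    intro i hi
    show (if i ≤ P.k then P.t i else Q.t (i - P.k)) <
      (if i + 1 ≤ P.k then P.t (i + 1) else Q.t (i + 1 - P.k))
    by_cases h : i + 1 ≤ P.k
    · simp only [if_pos h, if_pos (by omega : i ≤ P.k)]
      exact P.mono i (by omega)
    · by_cases h2 : i ≤ P.k
      · have hik : i = P.k := by omega
        have hi' : i < P.k + Q.k := hi
        have hQk : 0 < Q.k := by omega
        rw [if_pos h2, if_neg h]
        have h3 : i + 1 - P.k = 1 := by omega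
        have hm := Q.mono 0 hQk
        rw [Q.first] at hm
        rw [h3, hik, P.last]
        simpa using hm
      · simp only [if_neg h, if_neg h2]
        have h3 : i + 1 - P.k = (i - P.k) + 1 := by omega
        rw [h3]
        exact Q.mono (i - P.k) (by omega)

lemma Subdivision.concat_meshLE {a b c δ : ℝ} {P : Subdivision a b} {Q : Subdivision b c}
    (hP : P.MeshLE δ) (hQ : Q.MeshLE δ) : (P.concat Q).MeshLE δ := by
  intro i hi
  show (if i + 1 ≤ P.k then P.t (i+1) else Q.t (i+1-P.k)) -
    (if i ≤ P.k then P.t i else Q.t (i - P.k)) ≤ δ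
  by_cases h : i + 1 ≤ P.k
  · rw [if_pos h, if_pos (by omega : i ≤ P.k)]
    exact hP i (by omega)
  · by_cases h2 : i ≤ P.k
    · have hik : i = P.k := by omega
      have hi' : i < P.k + Q.k := hi
      have hQk : 0 < Q.k := by omega
      rw [if_neg h, if_pos h2]
      have h3 : i + 1 - P.k = 1 := by omega
      have hm := hQ 0 hQk
      rw [Q.first] at hm
      rw [h3, hik, P.last]
      simpa using hm
    · rw [if_neg h, if_neg h2]
      have h3 : i + 1 - P.k = (i - P.k) + 1 := by omega
      rw [h3]
      have hi' : i < P.k + Q.k := hi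
      exact hQ (i - P.k) (by omega)

lemma sigmaSum_concat {n : ℕ} {α : ℝ} {w : ℝ → EuclideanSpace ℝ (Fin n)} {a b c : ℝ} (P : Subdivision a b) (Q : Subdivision b c) :
    sigmaSum α w (P.concat Q) = sigmaSum α w P + sigmaSum α w Q := by
  have hconcat_le : ∀ i ≤ P.k, (P.concat Q).t i = P.t i := fun i hi => if_pos hi
  have hconcat_ge : ∀ i, P.k ≤ i → (P.concat Q).t i = Q.t (i - P.k) := by
    intro i hi
    rcases eq_or_lt_of_le hi with h'|h'
    · show (if i ≤ P.k then P.t i else _) = _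
      rw [if_pos h'.ge, ← h', Nat.sub_self, Q.first, P.last]
    · show (if i ≤ P.k then P.t i else _) = _
      rw [if_neg (by omega)]
  rw [sigmaSum, sigmaSum, sigmaSum, ← add_div]
  congr 1
  show ∑ i ∈ Finset.range (P.k + Q.k), _ = _
  rw [Finset.sum_range_add]
  congr 1
  · apply Finset.sum_congr rfl
    intro i hi
    rw [Finset.mem_range] at hi
    rw [hconcat_le (i+1) (by omega), hconcat_le i (by omega)]
  · apply Finset.sum_congr rfl
    intro i hi
    rw [Finset.mem_range] at hi
    rw [hconcat_ge (P.k + i + 1) (by omega), hconcat_ge (P.k + i) (by omega)]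
    have e1 : P.k + i + 1 - P.k = i + 1 := by omega
    have e2 : P.k + i - P.k = i := by omega
    rw [e1, e2]

def Subdivision.single {x z : ℝ} (h : x < z) : Subdivision x z where
  k := 1
  t i := if i = 0 then x else z
  first := rfl
  last := by norm_num
  mono := by
    intro i hi
    have hi' : i < 1 := hi
    have h0 : i = 0 := by omega
    subst h0
    norm_num [h]

lemma Subdivision.single_meshLE {x z δ : ℝ} (h : x < z) (hδ : z - x ≤ δ) :
    (Subdivision.single h).MeshLE δ := by
  intro i hi
  have hi' : i < 1 := hi
  have h0 : i = 0 := by omega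
  subst h0
  simpa [Subdivision.single] using hδ

lemma sigmaSum_single {n : ℕ} {α : ℝ} {w : ℝ → EuclideanSpace ℝ (Fin n)} {x z : ℝ} (h : x < z) :
    sigmaSum α w (Subdivision.single h) = ‖w z - w x‖ ^ α / Real.Gamma (α + 1) := by
  simp [sigmaSum, Subdivision.single]

def Subdivision.triv (x : ℝ) : Subdivision x x where
  k := 0
  t _ := x
  first := rfl
  last := rfl
  mono := by omega

lemma Subdivision.triv_meshLE {x δ : ℝ} : (Subdivision.triv x).MeshLE δ := by
  intro i hi
  have hi' : i < 0 := hi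
  omega

lemma sigmaSum_triv {n : ℕ} {α : ℝ} {w : ℝ → EuclideanSpace ℝ (Fin n)} {x : ℝ} : sigmaSum α w (Subdivision.triv x) = 0 := by
  simp [sigmaSum, Subdivision.triv]


namespace FTS

variable {n : ℕ} {α : ℝ} {w : ℝ → EuclideanSpace ℝ (Fin n)}


noncomputable def Dq (q : ℕ → ℝ) : ℕ → ℝ := fun n => (n+1) * q (n+1)

def Sml (q : ℕ → ℝ) (ρ : ℝ) : Prop := ∀ ρ', 0 ≤ ρ' → ρ' < ρ → Summable (fun n => |q n| * ρ'^n)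

lemma bounded_of_summable {f : ℕ → ℝ} (hf : Summable f) : ∃ C, ∀ n, |f n| ≤ C := by
  obtain ⟨C, hC⟩ := (hf.tendsto_atTop_zero.abs.bddAbove_range)
  exact ⟨C, fun n => hC ⟨n, rfl⟩⟩

lemma sml_of_bound {q : ℕ → ℝ} {L C : ℝ} (hb : ∀ n, |q n| * L^n ≤ C) : Sml q L := by
  intro ρ' h0 hρ
  have hL : 0 < L := lt_of_le_of_lt h0 hρ
  have hgeom : Summable (fun n : ℕ => C * (ρ'/L)^n) :=
    (summable_geometric_of_lt_one (by positivity) (by rwa [div_lt_one hL])).mul_left C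
  refine Summable.of_nonneg_of_le (fun n => by positivity) (fun n => ?_) hgeom
  have : |q n| * ρ'^n = (|q n| * L^n) * (ρ'/L)^n := by
    rw [div_pow]
    field_simp
  rw [this]
  have h2 : (0:ℝ) ≤ (ρ'/L)^n := by positivity
  exact mul_le_mul_of_nonneg_right (hb n) h2

lemma sml_Dq {q : ℕ → ℝ} {ρ : ℝ} (hq : Sml q ρ) : Sml (Dq q) ρ := by
  intro ρ' h0 hρ
  set ρ'' := (ρ' + ρ)/2 with hρ''def
  have h1 : ρ' < ρ'' := by simp only [hρ''def]; linarith
  have h2 : ρ'' < ρ := by simp only [hρ''def]; linarith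
  have h3 : 0 < ρ'' := by simp only [hρ''def]; linarith
  obtain ⟨C, hC⟩ := bounded_of_summable (hq ρ'' h3.le h2)
  have hr : ρ'/ρ'' < 1 := by rwa [div_lt_one h3]
  have hsum : Summable (fun n : ℕ => (C/ρ'') * (((n:ℝ)+1) * (ρ'/ρ'')^n)) := by
    apply Summable.mul_left
    have h4 : Summable (fun n : ℕ => (n:ℝ) * (ρ'/ρ'')^n) := by
      simpa using summable_pow_mul_geometric_of_norm_lt_one (R := ℝ) 1
        (r := ρ'/ρ'') (by rw [Real.norm_eq_abs, abs_of_nonneg (by positivity)]; exact hr)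
    have h5 : Summable (fun n : ℕ => (ρ'/ρ'')^n) :=
      summable_geometric_of_lt_one (by positivity) hr
    simpa [add_mul, one_mul] using h4.add h5
  refine Summable.of_nonneg_of_le (fun n => by positivity) (fun n => ?_) hsum
  have hqb : |q (n+1)| * ρ''^(n+1) ≤ C := le_trans (le_abs_self _) (hC (n+1))
  have key : |Dq q n| * ρ'^n = (((n:ℝ)+1) * (ρ'/ρ'')^n / ρ'') * (|q (n+1)| * ρ''^(n+1)) := by
    rw [Dq, abs_mul, abs_of_nonneg (by positivity : (0:ℝ) ≤ (n:ℝ)+1), div_pow, pow_succ]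
    field_simp
  rw [key]
  calc (((n:ℝ)+1) * (ρ'/ρ'')^n / ρ'') * (|q (n+1)| * ρ''^(n+1))
      ≤ (((n:ℝ)+1) * (ρ'/ρ'')^n / ρ'') * C := by
        apply mul_le_mul_of_nonneg_left hqb (by positivity)
    _ = (C/ρ'') * (((n:ℝ)+1) * (ρ'/ρ'')^n) := by ring

lemma sml_iter {q : ℕ → ℝ} {ρ : ℝ} (hq : Sml q ρ) (k : ℕ) : Sml (Dq^[k] q) ρ := by
  induction k with
  | zero => simpa using hq
  | succ k ih => rw [Function.iterate_succ_apply']; exact sml_Dq ih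

lemma ps_hasDerivAt_tsum {q : ℕ → ℝ} {ρ x₀ : ℝ} (hq : Sml q ρ) {y : ℝ} (hy : |y - x₀| < ρ) :
    HasDerivAt (fun x => ∑' n, q n * (x - x₀)^n) (∑' n, Dq q n * (y - x₀)^n) y := by
  have hρ : 0 < ρ := lt_of_le_of_lt (abs_nonneg _) hy
  set ρ'' := (|y - x₀| + ρ)/2 with hρ''def
  have h1 : |y - x₀| < ρ'' := by simp only [hρ''def]; linarith
  have h2 : ρ'' < ρ := by simp only [hρ''def]; linarith
  have h3 : 0 < ρ'' := by simp only [hρ''def]; positivity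
  set g : ℕ → ℝ → ℝ := fun n x => q n * (x - x₀)^n with hgdef
  set g' : ℕ → ℝ → ℝ := fun n x => q n * (n * (x - x₀)^(n-1)) with hg'def
  set u : ℕ → ℝ := fun n => |q n| * ((n:ℝ) * ρ''^(n-1)) with hudef
  have hu : Summable u := by
    rw [← summable_nat_add_iff 1]
    have : (fun n => u (n+1)) = fun n => |Dq q n| * ρ''^n := by
      funext n
      simp only [hudef, Dq, abs_mul, Nat.add_sub_cancel]
      rw [abs_of_nonneg (by positivity : (0:ℝ) ≤ (n:ℝ)+1)]
      push_cast
      ring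
    rw [this]
    exact sml_Dq hq ρ'' h3.le h2
  have hgderiv : ∀ n x, x ∈ Metric.ball x₀ ρ'' → HasDerivAt (g n) (g' n x) x := by
    intro n x _
    have h := (((hasDerivAt_id x).sub_const x₀).pow n).const_mul (q n)
    simpa [hgdef, hg'def, mul_one] using h
  have hbound : ∀ n x, x ∈ Metric.ball x₀ ρ'' → ‖g' n x‖ ≤ u n := by
    intro n x hx
    rw [Metric.mem_ball, Real.dist_eq] at hx
    simp only [hg'def, hudef, Real.norm_eq_abs, abs_mul]
    rw [abs_of_nonneg (by positivity : (0:ℝ) ≤ (n:ℝ)), abs_pow]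
    apply mul_le_mul_of_nonneg_left _ (abs_nonneg _)
    apply mul_le_mul_of_nonneg_left _ (by positivity)
    exact pow_le_pow_left₀ (abs_nonneg _) hx.le _
  have hg0 : Summable (fun n => g n x₀) := by
    apply summable_of_ne_finset_zero (s := {0})
    intro n hn
    simp only [Finset.mem_singleton] at hn
    simp [hgdef, zero_pow hn]
  have hmem : y ∈ Metric.ball x₀ ρ'' := by rw [Metric.mem_ball, Real.dist_eq]; exact h1
  have hmem0 : x₀ ∈ Metric.ball x₀ ρ'' := Metric.mem_ball_self h3
  have H := hasDerivAt_tsum_of_isPreconnected hu Metric.isOpen_ball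
    (convex_ball x₀ ρ'').isPreconnected hgderiv hbound hmem0 hg0 hmem
  have hsum' : Summable (fun n => g' n y) := by
    apply Summable.of_norm_bounded hu
    intro n; exact hbound n y hmem
  have heq : ∑' n, g' n y = ∑' n, Dq q n * (y - x₀)^n := by
    rw [Summable.tsum_eq_zero_add hsum']
    have h0 : g' 0 y = 0 := by simp [hg'def]
    rw [h0, zero_add]
    apply tsum_congr
    intro n
    simp only [hg'def, Dq, Nat.add_sub_cancel]
    push_cast
    ring
  rw [heq] at H
  exact H

lemma ps_iteratedDeriv {q : ℕ → ℝ} {ρ x₀ : ℝ} (hq : Sml q ρ) :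
    ∀ k, ∀ y, |y - x₀| < ρ → iteratedDeriv k (fun x => ∑' n, q n * (x - x₀)^n) y
      = ∑' n, (Dq^[k] q) n * (y - x₀)^n := by
  intro k
  induction k with
  | zero => intro y _; simp
  | succ k ih =>
    intro y hy
    have hev : iteratedDeriv k (fun x => ∑' n, q n * (x - x₀)^n)
        =ᶠ[𝓝 y] (fun x => ∑' n, (Dq^[k] q) n * (x - x₀)^n) := by
      have hmem : y ∈ Metric.ball x₀ ρ := by rw [Metric.mem_ball, Real.dist_eq]; exact hy
      filter_upwards [Metric.isOpen_ball.mem_nhds hmem] with x hx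
      rw [Metric.mem_ball, Real.dist_eq] at hx
      exact ih x hx
    rw [iteratedDeriv_succ, hev.deriv_eq]
    rw [(ps_hasDerivAt_tsum (sml_iter hq k) hy).deriv]
    rw [Function.iterate_succ_apply']

lemma ps_hasDerivAt_iter {q : ℕ → ℝ} {ρ x₀ : ℝ} (hq : Sml q ρ) (k : ℕ) {y : ℝ}
    (hy : |y - x₀| < ρ) :
    HasDerivAt (iteratedDeriv k (fun x => ∑' n, q n * (x - x₀)^n))
      (iteratedDeriv (k+1) (fun x => ∑' n, q n * (x - x₀)^n) y) y := by
  have hev : (fun x => ∑' n, (Dq^[k] q) n * (x - x₀)^n)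
      =ᶠ[𝓝 y] iteratedDeriv k (fun x => ∑' n, q n * (x - x₀)^n) := by
    have hmem : y ∈ Metric.ball x₀ ρ := by rw [Metric.mem_ball, Real.dist_eq]; exact hy
    filter_upwards [Metric.isOpen_ball.mem_nhds hmem] with x hx
    rw [Metric.mem_ball, Real.dist_eq] at hx
    exact (ps_iteratedDeriv hq k x hx).symm
  have H := (ps_hasDerivAt_tsum (sml_iter hq k) hy).congr_of_eventuallyEq hev.symm
  rw [ps_iteratedDeriv hq (k+1) y hy, Function.iterate_succ_apply']
  exact H

lemma Dq_iter_formula (k : ℕ) : ∀ (q : ℕ → ℝ) (n : ℕ),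
    (n.factorial : ℝ) * (Dq^[k] q) n = ((n+k).factorial : ℝ) * q (n+k) := by
  induction k with
  | zero => intro q n; simp
  | succ k ih =>
    intro q n
    rw [Function.iterate_succ_apply]
    rw [ih (Dq q) n]
    show ((n+k).factorial : ℝ) * ((↑(n+k)+1) * q (n+k+1)) = _
    have : n + (k+1) = (n+k) + 1 := by ring
    rw [this, Nat.factorial_succ]
    push_cast
    ring

lemma ps_center {q : ℕ → ℝ} {ρ x₀ : ℝ} (hq : Sml q ρ) (hρ : 0 < ρ) (k : ℕ) :
    iteratedDeriv k (fun x => ∑' n, q n * (x - x₀)^n) x₀ = (k.factorial : ℝ) * q k := by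
  rw [ps_iteratedDeriv hq k x₀ (by simpa using hρ)]
  rw [tsum_eq_single 0 (fun n hn => by rw [sub_self, zero_pow hn, mul_zero])]
  have h := Dq_iter_formula k q 0
  simpa using h


lemma sigmaSum_nonneg (hΓ : 0 < Real.Gamma (α + 1)) {a b : ℝ} (P : Subdivision a b) :
    0 ≤ sigmaSum α w P := by
  apply div_nonneg _ hΓ.le
  apply Finset.sum_nonneg
  intro i _
  exact Real.rpow_nonneg (norm_nonneg _) _

lemma gammaDelta_le_of {a b δ : ℝ} (P : Subdivision a b) (hP : P.MeshLE δ) :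
    gammaDelta α w a b δ ≤ ENNReal.ofReal (sigmaSum α w P) :=
  iInf_le_of_le P (iInf_le _ hP)

lemma gammaDelta_anti {a b δ δ' : ℝ} (h : δ ≤ δ') :
    gammaDelta α w a b δ' ≤ gammaDelta α w a b δ :=
  le_iInf fun P => le_iInf fun hP => gammaDelta_le_of P (fun i hi => (hP i hi).trans h)

lemma gammaDelta_le_massFn {a b δ : ℝ} (hδ : 0 < δ) :
    gammaDelta α w a b δ ≤ massFn α w a b :=
  le_iSup₂ (f := fun δ (_ : 0 < δ) => gammaDelta α w a b δ) δ hδ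

lemma massFn_le_of {a b : ℝ} {X : ℝ≥0∞} {δ₀ : ℝ} (hδ₀ : 0 < δ₀)
    (h : ∀ δ, 0 < δ → δ ≤ δ₀ → gammaDelta α w a b δ ≤ X) : massFn α w a b ≤ X := by
  refine iSup₂_le fun δ hδ => ?_
  rcases le_total δ δ₀ with h'|h'
  · exact h δ hδ h'
  · exact (gammaDelta_anti h').trans (h δ₀ hδ₀ le_rfl)

lemma exists_subdiv_lt {a b δ : ℝ} {C : ℝ≥0∞} (h : gammaDelta α w a b δ < C) :
    ∃ P : Subdivision a b, P.MeshLE δ ∧ ENNReal.ofReal (sigmaSum α w P) < C := by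
  rw [gammaDelta, iInf_lt_iff] at h
  obtain ⟨P, hP⟩ := h
  rw [iInf_lt_iff] at hP
  obtain ⟨hm, hlt⟩ := hP
  exact ⟨P, hm, hlt⟩

lemma gammaDelta_concat_le {x y z δ : ℝ} :
    gammaDelta α w x z δ ≤ gammaDelta α w x y δ + gammaDelta α w y z δ := by
  by_cases h1 : gammaDelta α w x y δ = ⊤
  · rw [h1]; simp
  by_cases h2 : gammaDelta α w y z δ = ⊤
  · rw [h2]; simp
  refine ENNReal.le_of_forall_pos_le_add fun ε hε hfin => ?_
  have hε2 : ((ε : ℝ≥0∞) / 2) ≠ 0 := by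
    simp [ENNReal.div_eq_top, (by exact_mod_cast hε.ne' : (ε:ℝ≥0∞) ≠ 0)]
  obtain ⟨P, hPm, hPσ⟩ := exists_subdiv_lt (ENNReal.lt_add_right h1 hε2)
  obtain ⟨Q, hQm, hQσ⟩ := exists_subdiv_lt (ENNReal.lt_add_right h2 hε2)
  calc gammaDelta α w x z δ
      ≤ ENNReal.ofReal (sigmaSum α w (P.concat Q)) :=
        gammaDelta_le_of _ (Subdivision.concat_meshLE hPm hQm)
    _ = ENNReal.ofReal (sigmaSum α w P + sigmaSum α w Q) := by rw [sigmaSum_concat]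
    _ ≤ ENNReal.ofReal (sigmaSum α w P) + ENNReal.ofReal (sigmaSum α w Q) :=
        ENNReal.ofReal_add_le
    _ ≤ (gammaDelta α w x y δ + (ε:ℝ≥0∞)/2) + (gammaDelta α w y z δ + (ε:ℝ≥0∞)/2) :=
        add_le_add hPσ.le hQσ.le
    _ = gammaDelta α w x y δ + gammaDelta α w y z δ + ε := by
        rw [add_add_add_comm, ENNReal.add_halves]

lemma massFn_subadd (x y z : ℝ) :
    massFn α w x z ≤ massFn α w x y + massFn α w y z := by
  refine iSup₂_le fun δ hδ => le_trans gammaDelta_concat_le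
    (add_le_add (gammaDelta_le_massFn hδ) (gammaDelta_le_massFn hδ))


lemma exists_split (hΓ : 0 < Real.Gamma (α + 1)) (hα : 0 ≤ α) {x y z δ ε : ℝ}
    (hxy : x ≤ y) (hyz : y ≤ z) (hε : 0 ≤ ε)
    (P : Subdivision x z) (hP : P.MeshLE δ)
    (hUC : ∀ u v : ℝ, u ∈ Icc x z → v ∈ Icc x z → |u - v| ≤ δ → ‖w u - w v‖ ≤ ε) :
    ∃ (P₁ : Subdivision x y) (P₂ : Subdivision y z), P₁.MeshLE δ ∧ P₂.MeshLE δ ∧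
      sigmaSum α w P₁ + sigmaSum α w P₂ ≤ sigmaSum α w P + 2 * ε ^ α / Real.Gamma (α + 1) := by
  have hεα : 0 ≤ 2 * ε ^ α / Real.Gamma (α + 1) := by
    apply div_nonneg _ hΓ.le
    have := Real.rpow_nonneg hε α
    linarith
  rcases eq_or_lt_of_le hxy with rfl|hxy'
  · refine ⟨Subdivision.triv x, P, Subdivision.triv_meshLE, hP, ?_⟩
    rw [sigmaSum_triv, zero_add]
    linarith
  rcases eq_or_lt_of_le hyz with rfl|hyz'
  · refine ⟨P, Subdivision.triv y, hP, Subdivision.triv_meshLE, ?_⟩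
    rw [sigmaSum_triv, add_zero]
    linarith
  classical
  set i₀ := Nat.findGreatest (fun i => P.t i ≤ y) P.k with hi₀def
  have h0 : P.t 0 ≤ y := by rw [P.first]; exact hxy'.le
  have hspec : P.t i₀ ≤ y :=
    Nat.findGreatest_spec (P := fun i => P.t i ≤ y) (Nat.zero_le P.k) h0
  have hi₀le : i₀ ≤ P.k := Nat.findGreatest_le _
  have hkpos : 0 < P.k := by
    rcases Nat.eq_zero_or_pos P.k with h|h
    · exfalso
      have hlast := P.last
      rw [h, P.first] at hlast
      linarith
    · exact h
  have hi₀lt : i₀ < P.k := by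
    rcases eq_or_lt_of_le hi₀le with h|h
    · exfalso
      have hsp := hspec
      rw [h, P.last] at hsp
      linarith
    · exact h
  have hnext : y < P.t (i₀ + 1) := by
    by_contra hcon
    push_neg at hcon
    exact Nat.findGreatest_is_greatest (P := fun i => P.t i ≤ y) (n := P.k)
      (by rw [← hi₀def]; omega) (by omega) hcon
  have hgapδ : P.t (i₀ + 1) - P.t i₀ ≤ δ := hP i₀ hi₀lt
  by_cases hy : P.t i₀ = y
  · refine ⟨⟨i₀, P.t, P.first, hy, fun i hi => P.mono i (by omega)⟩,
      ⟨P.k - i₀, fun i => P.t (i + i₀), by simpa using hy,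
        by show P.t (P.k - i₀ + i₀) = z; rw [Nat.sub_add_cancel hi₀le]; exact P.last,
        fun i hi => by
          have hi' : i < P.k - i₀ := hi
          have h := P.mono (i + i₀) (by omega)
          have e : i + 1 + i₀ = i + i₀ + 1 := by omega
          show P.t (i + i₀) < P.t (i + 1 + i₀)
          rw [e]; exact h⟩,
      fun i hi => hP i (by have hi' : i < i₀ := hi; omega),
      fun i hi => by
        have hi' : i < P.k - i₀ := hi
        have h := hP (i + i₀) (by omega)
        have e : i + 1 + i₀ = i + i₀ + 1 := by omega
        show P.t (i + 1 + i₀) - P.t (i + i₀) ≤ δ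
        rw [e]; exact h, ?_⟩
    have hsig : sigmaSum α w (⟨i₀, P.t, P.first, hy, fun i hi => P.mono i (by omega)⟩ :
          Subdivision x y) +
        sigmaSum α w (⟨P.k - i₀, fun i => P.t (i + i₀), by simpa using hy,
          by show P.t (P.k - i₀ + i₀) = z; rw [Nat.sub_add_cancel hi₀le]; exact P.last,
          fun i hi => by
            have hi' : i < P.k - i₀ := hi
            have h := P.mono (i + i₀) (by omega)
            have e : i + 1 + i₀ = i + i₀ + 1 := by omega
            show P.t (i + i₀) < P.t (i + 1 + i₀)
            rw [e]; exact h⟩ : Subdivision y z) = sigmaSum α w P := by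
      rw [sigmaSum, sigmaSum, sigmaSum, ← add_div]
      congr 1
      conv_rhs => rw [show P.k = i₀ + (P.k - i₀) from by omega]
      rw [Finset.sum_range_add]
      refine congrArg₂ (· + ·) (Finset.sum_congr rfl fun i _ => rfl)
        (Finset.sum_congr rfl fun i hi => ?_)
      show ‖w (P.t (i + 1 + i₀)) - w (P.t (i + i₀))‖ ^ α
        = ‖w (P.t (i₀ + i + 1)) - w (P.t (i₀ + i))‖ ^ α
      have e1 : i₀ + i + 1 = i + 1 + i₀ := by omega
      have e2 : i₀ + i = i + i₀ := by omega
      rw [e1, e2]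
    rw [hsig]
    linarith
  · have hty : P.t i₀ < y := lt_of_le_of_ne hspec hy
    refine ⟨⟨i₀ + 1, fun i => if i ≤ i₀ then P.t i else y,
        by show (if 0 ≤ i₀ then P.t 0 else y) = x; rw [if_pos (Nat.zero_le _)]; exact P.first,
        by show (if i₀ + 1 ≤ i₀ then P.t (i₀+1) else y) = y; rw [if_neg (by omega)],
        ?_⟩,
      ⟨P.k - i₀, fun i => if i = 0 then y else P.t (i + i₀),
        by show (if (0:ℕ) = 0 then y else P.t (0 + i₀)) = y; rw [if_pos rfl],
        by
          show (if P.k - i₀ = 0 then y else P.t (P.k - i₀ + i₀)) = z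
          rw [if_neg (by omega), Nat.sub_add_cancel hi₀le]; exact P.last,
        ?_⟩, ?_, ?_, ?_⟩
    · -- mono of T1
      intro i hi
      have hi' : i < i₀ + 1 := hi
      show (if i ≤ i₀ then P.t i else y) < (if i + 1 ≤ i₀ then P.t (i+1) else y)
      by_cases hii : i + 1 ≤ i₀
      · rw [if_pos (by omega), if_pos hii]
        exact P.mono i (by omega)
      · rw [if_pos (by omega), if_neg hii]
        have : i = i₀ := by omega
        rw [this]
        exact hty
    · -- mono of T2
      intro i hi
      have hi' : i < P.k - i₀ := hi
      show (if i = 0 then y else P.t (i + i₀)) < (if i + 1 = 0 then y else P.t (i + 1 + i₀))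
      rw [if_neg (show ¬(i + 1 = 0) by omega)]
      by_cases hi0 : i = 0
      · rw [if_pos hi0, hi0]
        have e : 0 + 1 + i₀ = i₀ + 1 := by omega
        rw [e]
        exact hnext
      · rw [if_neg hi0]
        have h := P.mono (i + i₀) (by omega)
        have e : i + 1 + i₀ = i + i₀ + 1 := by omega
        rw [e]
        exact h
    · -- mesh of T1
      intro i hi
      have hi' : i < i₀ + 1 := hi
      show (if i + 1 ≤ i₀ then P.t (i+1) else y) - (if i ≤ i₀ then P.t i else y) ≤ δ
      by_cases hii : i + 1 ≤ i₀
      · rw [if_pos hii, if_pos (by omega)]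
        exact hP i (by omega)
      · rw [if_neg hii, if_pos (by omega)]
        have : i = i₀ := by omega
        rw [this]
        linarith
    · -- mesh of T2
      intro i hi
      have hi' : i < P.k - i₀ := hi
      show (if i + 1 = 0 then y else P.t (i + 1 + i₀)) - (if i = 0 then y else P.t (i + i₀)) ≤ δ
      rw [if_neg (show ¬(i + 1 = 0) by omega)]
      by_cases hi0 : i = 0
      · rw [if_pos hi0, hi0]
        have e : 0 + 1 + i₀ = i₀ + 1 := by omega
        rw [e]
        linarith
      · rw [if_neg hi0]
        have h := hP (i + i₀) (by omega)
        have e : i + 1 + i₀ = i + i₀ + 1 := by omega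
        rw [e]
        exact h
    · -- the sigma inequality
      have hmemy : y ∈ Icc x z := ⟨hxy'.le, hyz'.le⟩
      have hb1 : ‖w y - w (P.t i₀)‖ ^ α ≤ ε ^ α := by
        apply Real.rpow_le_rpow (norm_nonneg _) _ hα
        apply hUC y (P.t i₀) hmemy (P.t_mem (by omega))
        rw [abs_of_nonneg (by linarith)]
        linarith
      have hb2 : ‖w (P.t (i₀ + 1)) - w y‖ ^ α ≤ ε ^ α := by
        apply Real.rpow_le_rpow (norm_nonneg _) _ hα
        apply hUC (P.t (i₀ + 1)) y (P.t_mem (by omega)) hmemy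
        rw [abs_of_nonneg (by linarith)]
        linarith
      have hfi₀ : 0 ≤ ‖w (P.t (i₀ + 1)) - w (P.t i₀)‖ ^ α :=
        Real.rpow_nonneg (norm_nonneg _) _
      rw [sigmaSum, sigmaSum, sigmaSum, ← add_div, ← add_div]
      rw [div_le_div_iff_of_pos_right hΓ]
      -- numerators
      have hN1 : (∑ i ∈ Finset.range (i₀ + 1),
          ‖w (if i + 1 ≤ i₀ then P.t (i+1) else y) - w (if i ≤ i₀ then P.t i else y)‖ ^ α)
          = (∑ i ∈ Finset.range i₀, ‖w (P.t (i+1)) - w (P.t i)‖ ^ α)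
            + ‖w y - w (P.t i₀)‖ ^ α := by
        rw [Finset.sum_range_succ]
        congr 1
        · refine Finset.sum_congr rfl fun i hi => ?_
          rw [Finset.mem_range] at hi
          rw [if_pos (by omega : i + 1 ≤ i₀), if_pos (by omega : i ≤ i₀)]
        · rw [if_neg (by omega), if_pos le_rfl]
      have hN2 : (∑ i ∈ Finset.range (P.k - i₀),
          ‖w (if i + 1 = 0 then y else P.t (i + 1 + i₀)) -
            w (if i = 0 then y else P.t (i + i₀))‖ ^ α)
          = ‖w (P.t (i₀ + 1)) - w y‖ ^ α
            + ∑ i ∈ Finset.range (P.k - i₀ - 1), ‖w (P.t (i₀ + 1 + i + 1)) - w (P.t (i₀ + 1 + i))‖ ^ α := by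
        rw [show P.k - i₀ = (P.k - i₀ - 1) + 1 from by omega, Finset.sum_range_succ']
        rw [add_comm]
        congr 1
        · rw [if_neg (by omega), if_pos rfl]
          have e : 0 + 1 + i₀ = i₀ + 1 := by omega
          rw [e]
        · refine Finset.sum_congr rfl fun i hi => ?_
          rw [Finset.mem_range] at hi
          rw [if_neg (by omega), if_neg (by omega)]
          have e1 : i + 1 + 1 + i₀ = i₀ + 1 + i + 1 := by omega
          have e2 : i + 1 + i₀ = i₀ + 1 + i := by omega
          rw [e1, e2]
      have hN : (∑ i ∈ Finset.range P.k, ‖w (P.t (i+1)) - w (P.t i)‖ ^ α)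
          = ((∑ i ∈ Finset.range i₀, ‖w (P.t (i+1)) - w (P.t i)‖ ^ α)
            + ‖w (P.t (i₀ + 1)) - w (P.t i₀)‖ ^ α)
            + ∑ i ∈ Finset.range (P.k - i₀ - 1), ‖w (P.t (i₀ + 1 + i + 1)) - w (P.t (i₀ + 1 + i))‖ ^ α := by
        conv_lhs => rw [show P.k = (i₀ + 1) + (P.k - i₀ - 1) from by omega]
        rw [Finset.sum_range_add, Finset.sum_range_succ]
      show (∑ i ∈ Finset.range (i₀ + 1), _) + (∑ i ∈ Finset.range (P.k - i₀), _) ≤ _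
      rw [hN1, hN2, hN]
      linarith


lemma massFn_superadd (hΓ : 0 < Real.Gamma (α + 1)) (hα : 0 ≤ α) (hα1 : 1 ≤ α)
    {a₀ b₀ x y z : ℝ} (hw : ContinuousOn w (Icc a₀ b₀))
    (hx : a₀ ≤ x) (hxy : x ≤ y) (hyz : y ≤ z) (hz : z ≤ b₀) :
    massFn α w x y + massFn α w y z ≤ massFn α w x z := by
  refine ENNReal.le_of_forall_pos_le_add fun η hη hfin => ?_
  have hη' : (0:ℝ) < η := hη
  set e : ℝ := min 1 ((η : ℝ) * Real.Gamma (α + 1) / 2) with hedef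
  have he0 : 0 < e := lt_min one_pos (by positivity)
  have he1 : e ≤ 1 := min_le_left _ _
  have heα : 2 * e ^ α / Real.Gamma (α + 1) ≤ (η : ℝ) := by
    have h1 : e ^ α ≤ e ^ (1:ℝ) := Real.rpow_le_rpow_of_exponent_ge he0 he1 hα1
    rw [Real.rpow_one] at h1
    have h2 : e ≤ (η : ℝ) * Real.Gamma (α + 1) / 2 := min_le_right _ _
    rw [div_le_iff₀ hΓ]
    nlinarith
  obtain ⟨δ₀, hδ₀, hδ₀'⟩ := Metric.uniformContinuousOn_iff.mp
    ((isCompact_Icc).uniformContinuousOn_of_continuous hw) e he0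
  set κ := δ₀ / 2 with hκdef
  have hκ : 0 < κ := by positivity
  have hUC : ∀ δ', 0 < δ' → δ' ≤ κ → ∀ u v : ℝ, u ∈ Icc x z → v ∈ Icc x z →
      |u - v| ≤ δ' → ‖w u - w v‖ ≤ e := by
    intro δ' h1 h2 u v hu hv huv
    have hu' : u ∈ Icc a₀ b₀ := ⟨le_trans hx hu.1, le_trans hu.2 hz⟩
    have hv' : v ∈ Icc a₀ b₀ := ⟨le_trans hx hv.1, le_trans hv.2 hz⟩
    have hd := hδ₀' u hu' v hv' (by
      rw [Real.dist_eq]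
      have hcd : κ ≤ δ₀ / 2 := le_of_eq hκdef.symm
      linarith)
    rw [dist_eq_norm] at hd
    exact hd.le
  have key : ∀ δ', 0 < δ' → δ' ≤ κ →
      gammaDelta α w x y δ' + gammaDelta α w y z δ' ≤
        massFn α w x z + ENNReal.ofReal (2 * e ^ α / Real.Gamma (α + 1)) := by
    intro δ' h1 h2
    by_cases htop : gammaDelta α w x z δ' = ⊤
    · have hmt : massFn α w x z = ⊤ := by
        rw [eq_top_iff, ← htop]
        exact gammaDelta_le_massFn h1
      rw [hmt]
      simp
    refine ENNReal.le_of_forall_pos_le_add fun η₂ hη₂ hfin₂ => ?_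
    obtain ⟨P, hPm, hPσ⟩ := exists_subdiv_lt
      (ENNReal.lt_add_right htop (ENNReal.coe_ne_zero.mpr hη₂.ne'))
    obtain ⟨P₁, P₂, hm1, hm2, hσ⟩ := exists_split hΓ hα hxy hyz he0.le P hPm (hUC δ' h1 h2)
    calc gammaDelta α w x y δ' + gammaDelta α w y z δ'
        ≤ ENNReal.ofReal (sigmaSum α w P₁) + ENNReal.ofReal (sigmaSum α w P₂) :=
          add_le_add (gammaDelta_le_of _ hm1) (gammaDelta_le_of _ hm2)
      _ = ENNReal.ofReal (sigmaSum α w P₁ + sigmaSum α w P₂) :=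
          (ENNReal.ofReal_add (sigmaSum_nonneg hΓ _) (sigmaSum_nonneg hΓ _)).symm
      _ ≤ ENNReal.ofReal (sigmaSum α w P + 2 * e ^ α / Real.Gamma (α + 1)) :=
          ENNReal.ofReal_le_ofReal hσ
      _ ≤ ENNReal.ofReal (sigmaSum α w P) + ENNReal.ofReal (2 * e ^ α / Real.Gamma (α + 1)) :=
          ENNReal.ofReal_add_le
      _ ≤ (gammaDelta α w x z δ' + η₂) + ENNReal.ofReal (2 * e ^ α / Real.Gamma (α + 1)) :=
          add_le_add hPσ.le le_rfl
      _ = (gammaDelta α w x z δ' + ENNReal.ofReal (2 * e ^ α / Real.Gamma (α + 1))) + η₂ := by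
          ring
      _ ≤ (massFn α w x z + ENNReal.ofReal (2 * e ^ α / Real.Gamma (α + 1))) + η₂ :=
          add_le_add (add_le_add (gammaDelta_le_massFn h1) le_rfl) le_rfl
  haveI : Nonempty {δ' : ℝ // 0 < δ' ∧ δ' ≤ κ} := ⟨⟨κ, hκ, le_rfl⟩⟩
  have hrepr : ∀ u v : ℝ, massFn α w u v =
      ⨆ d : {δ' : ℝ // 0 < δ' ∧ δ' ≤ κ}, gammaDelta α w u v d.1 := by
    intro u v
    apply le_antisymm
    · refine iSup₂_le fun δ' hδ' => ?_
      refine le_iSup_of_le ⟨min δ' κ, lt_min hδ' hκ, min_le_right _ _⟩ ?_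
      exact gammaDelta_anti (min_le_left _ _)
    · exact iSup_le fun d => gammaDelta_le_massFn d.2.1
  rw [hrepr x y, hrepr y z, ENNReal.iSup_add_iSup (fun i j => ?_)]
  swap
  · refine ⟨⟨min i.1 j.1, lt_min i.2.1 j.2.1, le_trans (min_le_left _ _) i.2.2⟩, ?_⟩
    exact add_le_add (gammaDelta_anti (min_le_left _ _)) (gammaDelta_anti (min_le_right _ _))
  refine iSup_le fun d => le_trans (key d.1 d.2.1 d.2.2) ?_
  refine add_le_add le_rfl ?_
  rw [← ENNReal.ofReal_coe_nnreal]
  exact ENNReal.ofReal_le_ofReal heα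

lemma massFn_le_superset_left (hΓ : 0 < Real.Gamma (α + 1)) (hα : 0 ≤ α) (hα1 : 1 ≤ α)
    {a₀ b₀ x y z : ℝ} (hw : ContinuousOn w (Icc a₀ b₀))
    (hx : a₀ ≤ x) (hxy : x ≤ y) (hyz : y ≤ z) (hz : z ≤ b₀) :
    massFn α w x y ≤ massFn α w x z :=
  le_trans le_self_add (massFn_superadd hΓ hα hα1 hw hx hxy hyz hz)

lemma massFn_le_superset_right (hΓ : 0 < Real.Gamma (α + 1)) (hα : 0 ≤ α) (hα1 : 1 ≤ α)
    {a₀ b₀ x y z : ℝ} (hw : ContinuousOn w (Icc a₀ b₀))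
    (hx : a₀ ≤ x) (hxy : x ≤ y) (hyz : y ≤ z) (hz : z ≤ b₀) :
    massFn α w y z ≤ massFn α w x z :=
  le_trans le_add_self (massFn_superadd hΓ hα hα1 hw hx hxy hyz hz)

lemma massFn_vanish_right (hΓ : 0 < Real.Gamma (α + 1)) (hα : 0 ≤ α) (hα1 : 1 ≤ α)
    {a₀ b₀ s : ℝ} (hw : ContinuousOn w (Icc a₀ b₀))
    (hs : a₀ ≤ s) (hsb : s < b₀) (hfin : massFn α w s b₀ ≠ ⊤) :
    (⨅ z ∈ Ioc s b₀, massFn α w s z) = 0 := by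
  set X := massFn α w s b₀ with hXdef
  set c := ⨅ z ∈ Ioc s b₀, massFn α w s z with hcdef
  have hcX : c ≤ X := iInf₂_le b₀ ⟨hsb, le_rfl⟩
  have claim : ∀ η : ℝ, 0 < η → X ≤ (X - c) + ENNReal.ofReal η := by
    intro η hη
    set e : ℝ := min 1 (η * Real.Gamma (α + 1)) with hedef
    have he0 : 0 < e := lt_min one_pos (by positivity)
    have he1 : e ≤ 1 := min_le_left _ _
    have heα : e ^ α / Real.Gamma (α + 1) ≤ η := by
      have h1 : e ^ α ≤ e ^ (1:ℝ) := Real.rpow_le_rpow_of_exponent_ge he0 he1 hα1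
      rw [Real.rpow_one] at h1
      have h2 : e ≤ η * Real.Gamma (α + 1) := min_le_right _ _
      rw [div_le_iff₀ hΓ]
      nlinarith
    obtain ⟨δ₀, hδ₀, hδ₀'⟩ := Metric.uniformContinuousOn_iff.mp
      ((isCompact_Icc).uniformContinuousOn_of_continuous hw) e he0
    set κ := min (δ₀ / 2) (b₀ - s) with hκdef
    have hκ : 0 < κ := lt_min (by positivity) (by linarith)
    refine massFn_le_of hκ fun δ hδ hδκ => ?_
    set z' := s + δ with hz'def
    have hz'1 : s < z' := by rw [hz'def]; linarith
    have hz'2 : z' ≤ b₀ := by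
      have : δ ≤ b₀ - s := le_trans hδκ (min_le_right _ _)
      rw [hz'def]; linarith
    have hz'm : z' ∈ Ioc s b₀ := ⟨hz'1, hz'2⟩
    have hsmem : s ∈ Icc a₀ b₀ := ⟨hs, hsb.le⟩
    have hz'mem : z' ∈ Icc a₀ b₀ := ⟨by linarith, hz'2⟩
    have hhead : ‖w z' - w s‖ ≤ e := by
      have hd := hδ₀' z' hz'mem s hsmem (by
        rw [Real.dist_eq, hz'def]
        have h3 : δ ≤ δ₀ / 2 := le_trans hδκ (min_le_left _ _)
        rw [abs_of_nonneg (by linarith : (0:ℝ) ≤ s + δ - s)]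
        linarith)
      rw [dist_eq_norm] at hd
      exact hd.le
    have h2 : gammaDelta α w s z' δ ≤ ENNReal.ofReal (e ^ α / Real.Gamma (α + 1)) := by
      refine le_trans (gammaDelta_le_of (Subdivision.single hz'1)
        (Subdivision.single_meshLE hz'1 (by rw [hz'def]; linarith))) ?_
      rw [sigmaSum_single]
      apply ENNReal.ofReal_le_ofReal
      exact (div_le_div_iff_of_pos_right hΓ).mpr (Real.rpow_le_rpow (norm_nonneg _) hhead hα)
    have h3 : gammaDelta α w z' b₀ δ ≤ X - c := by
      refine le_trans (gammaDelta_le_massFn hδ) ?_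
      have hcfin : c ≠ ⊤ := fun h => hfin (eq_top_iff.mpr (h ▸ hcX))
      apply ENNReal.le_sub_of_add_le_left hcfin
      calc c + massFn α w z' b₀ ≤ massFn α w s z' + massFn α w z' b₀ :=
            add_le_add (iInf₂_le z' hz'm) le_rfl
        _ ≤ X := massFn_superadd hΓ hα hα1 hw hs hz'1.le hz'2 le_rfl
    calc gammaDelta α w s b₀ δ
        ≤ gammaDelta α w s z' δ + gammaDelta α w z' b₀ δ := gammaDelta_concat_le
      _ ≤ ENNReal.ofReal (e ^ α / Real.Gamma (α + 1)) + (X - c) := add_le_add h2 h3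
      _ ≤ ENNReal.ofReal η + (X - c) := add_le_add (ENNReal.ofReal_le_ofReal heα) le_rfl
      _ = (X - c) + ENNReal.ofReal η := by rw [add_comm]
  have hXc : X ≤ X - c := by
    refine ENNReal.le_of_forall_pos_le_add fun η hη hfin2 => ?_
    have := claim η hη
    rwa [ENNReal.ofReal_coe_nnreal] at this
  have hsum : X + c ≤ X := by
    calc X + c ≤ (X - c) + c := add_le_add hXc le_rfl
      _ = X := tsub_add_cancel_of_le hcX
  by_contra h
  exact absurd hsum (not_le.mpr (ENNReal.lt_add_right hfin h))

lemma massFn_vanish_left (hΓ : 0 < Real.Gamma (α + 1)) (hα : 0 ≤ α) (hα1 : 1 ≤ α)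
    {a₀ b₀ s : ℝ} (hw : ContinuousOn w (Icc a₀ b₀))
    (has : a₀ < s) (hsb : s ≤ b₀) (hfin : massFn α w a₀ s ≠ ⊤) :
    (⨅ y ∈ Ico a₀ s, massFn α w y s) = 0 := by
  set X := massFn α w a₀ s with hXdef
  set c := ⨅ y ∈ Ico a₀ s, massFn α w y s with hcdef
  have hcX : c ≤ X := iInf₂_le a₀ ⟨le_rfl, has⟩
  have claim : ∀ η : ℝ, 0 < η → X ≤ (X - c) + ENNReal.ofReal η := by
    intro η hη
    set e : ℝ := min 1 (η * Real.Gamma (α + 1)) with hedef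
    have he0 : 0 < e := lt_min one_pos (by positivity)
    have he1 : e ≤ 1 := min_le_left _ _
    have heα : e ^ α / Real.Gamma (α + 1) ≤ η := by
      have h1 : e ^ α ≤ e ^ (1:ℝ) := Real.rpow_le_rpow_of_exponent_ge he0 he1 hα1
      rw [Real.rpow_one] at h1
      have h2 : e ≤ η * Real.Gamma (α + 1) := min_le_right _ _
      rw [div_le_iff₀ hΓ]
      nlinarith
    obtain ⟨δ₀, hδ₀, hδ₀'⟩ := Metric.uniformContinuousOn_iff.mp
      ((isCompact_Icc).uniformContinuousOn_of_continuous hw) e he0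
    set κ := min (δ₀ / 2) (s - a₀) with hκdef
    have hκ : 0 < κ := lt_min (by positivity) (by linarith)
    refine massFn_le_of hκ fun δ hδ hδκ => ?_
    set y' := s - δ with hy'def
    have hy'1 : y' < s := by rw [hy'def]; linarith
    have hy'2 : a₀ ≤ y' := by
      have : δ ≤ s - a₀ := le_trans hδκ (min_le_right _ _)
      rw [hy'def]; linarith
    have hy'm : y' ∈ Ico a₀ s := ⟨hy'2, hy'1⟩
    have hsmem : s ∈ Icc a₀ b₀ := ⟨has.le, hsb⟩
    have hy'mem : y' ∈ Icc a₀ b₀ := ⟨hy'2, by linarith⟩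
    have hhead : ‖w s - w y'‖ ≤ e := by
      have hd := hδ₀' s hsmem y' hy'mem (by
        rw [Real.dist_eq, hy'def]
        have h3 : δ ≤ δ₀ / 2 := le_trans hδκ (min_le_left _ _)
        rw [abs_of_nonneg (by linarith : (0:ℝ) ≤ s - (s - δ))]
        linarith)
      rw [dist_eq_norm] at hd
      exact hd.le
    have h2 : gammaDelta α w y' s δ ≤ ENNReal.ofReal (e ^ α / Real.Gamma (α + 1)) := by
      refine le_trans (gammaDelta_le_of (Subdivision.single hy'1)
        (Subdivision.single_meshLE hy'1 (by rw [hy'def]; linarith))) ?_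
      rw [sigmaSum_single]
      apply ENNReal.ofReal_le_ofReal
      exact (div_le_div_iff_of_pos_right hΓ).mpr (Real.rpow_le_rpow (norm_nonneg _) hhead hα)
    have h3 : gammaDelta α w a₀ y' δ ≤ X - c := by
      refine le_trans (gammaDelta_le_massFn hδ) ?_
      have hcfin : c ≠ ⊤ := fun h => hfin (eq_top_iff.mpr (h ▸ hcX))
      apply ENNReal.le_sub_of_add_le_left hcfin
      calc c + massFn α w a₀ y' ≤ massFn α w y' s + massFn α w a₀ y' :=
            add_le_add (iInf₂_le y' hy'm) le_rfl
        _ = massFn α w a₀ y' + massFn α w y' s := by rw [add_comm]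
        _ ≤ X := massFn_superadd hΓ hα hα1 hw le_rfl hy'2 hy'1.le hsb
    calc gammaDelta α w a₀ s δ
        ≤ gammaDelta α w a₀ y' δ + gammaDelta α w y' s δ := gammaDelta_concat_le
      _ ≤ (X - c) + ENNReal.ofReal (e ^ α / Real.Gamma (α + 1)) := add_le_add h3 h2
      _ ≤ (X - c) + ENNReal.ofReal η := add_le_add le_rfl (ENNReal.ofReal_le_ofReal heα)
  have hXc : X ≤ X - c := by
    refine ENNReal.le_of_forall_pos_le_add fun η hη hfin2 => ?_
    have := claim η hη
    rwa [ENNReal.ofReal_coe_nnreal] at this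
  have hsum : X + c ≤ X := by
    calc X + c ≤ (X - c) + c := add_le_add hXc le_rfl
      _ = X := tsub_add_cancel_of_le hcX
  by_contra h
  exact absurd hsum (not_le.mpr (ENNReal.lt_add_right hfin h))


lemma eventuallyEq_iteratedDeriv {f g : ℝ → ℝ} {y : ℝ} (h : f =ᶠ[𝓝 y] g) (k : ℕ) :
    iteratedDeriv k f =ᶠ[𝓝 y] iteratedDeriv k g := by
  induction k with
  | zero => simpa using h
  | succ k ih => simpa only [iteratedDeriv_succ] using ih.deriv

lemma exists_approach_seq (hΓ : 0 < Real.Gamma (α + 1)) (hα : 0 ≤ α) (hα1 : 1 ≤ α)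
    {a₀ b₀ a b s : ℝ} (hw : ContinuousOn w (Icc a₀ b₀))
    (hfin : ∀ t ∈ Icc a₀ b₀, massFn α w a₀ t ≠ ⊤)
    (hmono : MonotoneOn (SF α w a₀) (Icc a₀ b₀))
    (ha : a₀ ≤ a) (hab : a < b) (hb : b ≤ b₀) (hs : s ∈ Icc a b) :
    ∃ u : ℕ → ℝ, (∀ j, u j ∈ Icc a b ∧ u j ≠ s) ∧ Tendsto u atTop (𝓝 s) ∧
      Tendsto (fun j => SF α w a₀ (u j)) atTop (𝓝 (SF α w a₀ s)) := by
  have hab₀ : a₀ ≤ b₀ := le_trans ha (le_trans hab.le hb)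
  have hsa₀ : a₀ ≤ s := le_trans ha hs.1
  have hsb₀' : s ≤ b₀ := le_trans hs.2 hb
  have hsI : s ∈ Icc a₀ b₀ := ⟨hsa₀, hsb₀'⟩
  have hfins : massFn α w a₀ s ≠ ⊤ := hfin s hsI
  rcases lt_or_eq_of_le hs.2 with hsb|hsb
  · -- s < b : approach from the right
    have hsb₀ : s < b₀ := lt_of_lt_of_le hsb hb
    have hfin' : massFn α w s b₀ ≠ ⊤ := by
      refine fun htop => (hfin b₀ ⟨hab₀, le_rfl⟩) (eq_top_iff.mpr ?_)
      rw [← htop]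
      exact massFn_le_superset_right hΓ hα hα1 hw le_rfl hsa₀ hsb₀.le le_rfl
    have hvan := massFn_vanish_right hΓ hα hα1 hw hsa₀ hsb₀ hfin'
    have hpick : ∀ j : ℕ, ∃ z, z ∈ Ioc s b₀ ∧
        massFn α w s z < ENNReal.ofReal (1 / ((j:ℝ) + 1)) := by
      intro j
      have hlt : (⨅ z ∈ Ioc s b₀, massFn α w s z) < ENNReal.ofReal (1 / ((j:ℝ) + 1)) := by
        rw [hvan]
        exact ENNReal.ofReal_pos.mpr (by positivity)
      rw [iInf_lt_iff] at hlt
      obtain ⟨z, hz⟩ := hlt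
      rw [iInf_lt_iff] at hz
      obtain ⟨hzm, hzlt⟩ := hz
      exact ⟨z, hzm, hzlt⟩
    choose zf hzf1 hzf2 using hpick
    set u : ℕ → ℝ := fun j => min (zf j) (min (s + (b - s) / ((j:ℝ) + 1)) b) with hudef
    have hu1 : ∀ j, s < u j := by
      intro j
      apply lt_min (hzf1 j).1
      apply lt_min _ hsb
      have : (0:ℝ) < (b - s) / ((j:ℝ) + 1) := div_pos (by linarith) (by positivity)
      linarith
    have hu2 : ∀ j, u j ≤ b := fun j => le_trans (min_le_right _ _) (min_le_right _ _)
    have humem : ∀ j, u j ∈ Icc a b := fun j => ⟨le_trans hs.1 (hu1 j).le, hu2 j⟩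
    have humem₀ : ∀ j, u j ∈ Icc a₀ b₀ := fun j => ⟨le_trans ha (humem j).1,
      le_trans (hu2 j) hb⟩
    have hmassu : ∀ j, massFn α w s (u j) ≤ massFn α w s (zf j) := fun j =>
      massFn_le_superset_left hΓ hα hα1 hw hsa₀ (hu1 j).le (min_le_left _ _) (hzf1 j).2
    have hSFb : ∀ j, SF α w a₀ (u j) - SF α w a₀ s ≤ 1 / ((j:ℝ) + 1) := by
      intro j
      have hfin2 : massFn α w s (u j) ≠ ⊤ :=
        ne_of_lt (lt_of_le_of_lt (hmassu j) (lt_of_lt_of_le (hzf2 j) le_top))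
      have hstep : SF α w a₀ (u j) ≤ SF α w a₀ s + (massFn α w s (u j)).toReal := by
        rw [SF, SF, ← ENNReal.toReal_add hfins hfin2]
        exact ENNReal.toReal_mono (by rw [ENNReal.add_ne_top]; exact ⟨hfins, hfin2⟩)
          (massFn_subadd a₀ s (u j))
      have h2 : (massFn α w s (u j)).toReal ≤ 1 / ((j:ℝ) + 1) := by
        have hle := le_trans (hmassu j) (hzf2 j).le
        calc (massFn α w s (u j)).toReal
            ≤ (ENNReal.ofReal (1 / ((j:ℝ) + 1))).toReal :=
              ENNReal.toReal_mono ENNReal.ofReal_ne_top hle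
          _ = 1 / ((j:ℝ) + 1) := ENNReal.toReal_ofReal (by positivity)
      linarith
    have hSFlb : ∀ j, 0 ≤ SF α w a₀ (u j) - SF α w a₀ s := fun j =>
      sub_nonneg.mpr (hmono hsI (humem₀ j) (hu1 j).le)
    refine ⟨u, fun j => ⟨humem j, (hu1 j).ne'⟩, ?_, ?_⟩
    · rw [tendsto_iff_dist_tendsto_zero]
      have hbound : ∀ j, dist (u j) s ≤ (b - s) * (1 / ((j:ℝ) + 1)) := by
        intro j
        rw [Real.dist_eq, abs_of_nonneg (by linarith [hu1 j])]
        have hle : u j ≤ s + (b - s) / ((j:ℝ) + 1) :=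
          le_trans (min_le_right _ _) (min_le_left _ _)
        have : (b - s) / ((j:ℝ) + 1) = (b - s) * (1 / ((j:ℝ) + 1)) := by ring
        linarith [this ▸ hle]
      refine squeeze_zero (fun j => dist_nonneg) hbound ?_
      simpa using tendsto_one_div_add_atTop_nhds_zero_nat.const_mul (b - s)
    · rw [tendsto_iff_dist_tendsto_zero]
      refine squeeze_zero (fun j => dist_nonneg) (fun j => ?_)
        tendsto_one_div_add_atTop_nhds_zero_nat
      rw [Real.dist_eq, abs_of_nonneg (hSFlb j)]
      exact hSFb j
  · -- s = b : approach from the left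
    have hsa : a < s := by rw [← hsb] at hab; exact hab
    have hsa₀' : a₀ < s := lt_of_le_of_lt ha hsa
    have hvan := massFn_vanish_left hΓ hα hα1 hw hsa₀' hsb₀' hfins
    have hpick : ∀ j : ℕ, ∃ z, z ∈ Ico a₀ s ∧
        massFn α w z s < ENNReal.ofReal (1 / ((j:ℝ) + 1)) := by
      intro j
      have hlt : (⨅ y ∈ Ico a₀ s, massFn α w y s) < ENNReal.ofReal (1 / ((j:ℝ) + 1)) := by
        rw [hvan]
        exact ENNReal.ofReal_pos.mpr (by positivity)
      rw [iInf_lt_iff] at hlt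
      obtain ⟨z, hz⟩ := hlt
      rw [iInf_lt_iff] at hz
      obtain ⟨hzm, hzlt⟩ := hz
      exact ⟨z, hzm, hzlt⟩
    choose yf hyf1 hyf2 using hpick
    set u : ℕ → ℝ := fun j => max (yf j) (max (s - (s - a) / ((j:ℝ) + 1)) a) with hudef
    have hu1 : ∀ j, u j < s := by
      intro j
      apply max_lt (hyf1 j).2
      apply max_lt _ hsa
      have : (0:ℝ) < (s - a) / ((j:ℝ) + 1) := div_pos (by linarith) (by positivity)
      linarith
    have hu2 : ∀ j, a ≤ u j := fun j => le_trans (le_max_right _ _) (le_max_right _ _)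
    have humem : ∀ j, u j ∈ Icc a b := fun j => ⟨hu2 j, by rw [← hsb]; exact (hu1 j).le⟩
    have humem₀ : ∀ j, u j ∈ Icc a₀ b₀ := fun j => ⟨le_trans ha (hu2 j),
      le_trans (humem j).2 hb⟩
    have hmassu : ∀ j, massFn α w (u j) s ≤ massFn α w (yf j) s := fun j =>
      massFn_le_superset_right hΓ hα hα1 hw (hyf1 j).1 (le_max_left _ _) (hu1 j).le hsb₀'
    have hSFb : ∀ j, SF α w a₀ s - SF α w a₀ (u j) ≤ 1 / ((j:ℝ) + 1) := by
      intro j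
      have hfin2 : massFn α w (u j) s ≠ ⊤ :=
        ne_of_lt (lt_of_le_of_lt (hmassu j) (lt_of_lt_of_le (hyf2 j) le_top))
      have hfinu : massFn α w a₀ (u j) ≠ ⊤ := hfin (u j) (humem₀ j)
      have hstep : SF α w a₀ s ≤ SF α w a₀ (u j) + (massFn α w (u j) s).toReal := by
        rw [SF, SF, ← ENNReal.toReal_add hfinu hfin2]
        exact ENNReal.toReal_mono (by rw [ENNReal.add_ne_top]; exact ⟨hfinu, hfin2⟩)
          (massFn_subadd a₀ (u j) s)
      have h2 : (massFn α w (u j) s).toReal ≤ 1 / ((j:ℝ) + 1) := by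
        have hle := le_trans (hmassu j) (hyf2 j).le
        calc (massFn α w (u j) s).toReal
            ≤ (ENNReal.ofReal (1 / ((j:ℝ) + 1))).toReal :=
              ENNReal.toReal_mono ENNReal.ofReal_ne_top hle
          _ = 1 / ((j:ℝ) + 1) := ENNReal.toReal_ofReal (by positivity)
      linarith
    have hSFlb : ∀ j, 0 ≤ SF α w a₀ s - SF α w a₀ (u j) := fun j =>
      sub_nonneg.mpr (hmono (humem₀ j) hsI (hu1 j).le)
    refine ⟨u, fun j => ⟨humem j, (hu1 j).ne⟩, ?_, ?_⟩
    · rw [tendsto_iff_dist_tendsto_zero]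
      have hbound : ∀ j, dist (u j) s ≤ (s - a) * (1 / ((j:ℝ) + 1)) := by
        intro j
        rw [Real.dist_eq, abs_of_nonpos (by linarith [hu1 j])]
        have hge : s - (s - a) / ((j:ℝ) + 1) ≤ u j :=
          le_trans (le_max_left _ _) (le_max_right _ _)
        have : (s - a) / ((j:ℝ) + 1) = (s - a) * (1 / ((j:ℝ) + 1)) := by ring
        linarith [this ▸ hge]
      refine squeeze_zero (fun j => dist_nonneg) hbound ?_
      simpa using tendsto_one_div_add_atTop_nhds_zero_nat.const_mul (s - a)
    · rw [tendsto_iff_dist_tendsto_zero]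
      refine squeeze_zero (fun j => dist_nonneg) (fun j => ?_)
        tendsto_one_div_add_atTop_nhds_zero_nat
      rw [Real.dist_eq, abs_of_nonpos (by linarith [hSFlb j])]
      simpa using hSFb j



end FTS

end FTSAux

open FTS

/-- fractal Taylor series: if h is F^α-differentiable any number
of times on F, with each iterated F^α-derivative Dh k bounded (Dh 0 = h,
Dh (k+1) = D_F^α (Dh k)), and g = φ[h] admits the ordinary Taylor expansion
g(u) = Σ_k (u−y)^k/k! · g⁽ᵏ⁾(y) for all u, y ∈ [S_F^α(a), S_F^α(b)], then for
all θ, θ' ∈ C(a,b):  h(θ) = Σ_k (J(θ)−J(θ'))^k/k! · ((D_F^α)^k h)(θ'). -/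
theorem fractal_taylor_series {n : ℕ} (hn : 1 ≤ n) {a₀ b₀ : ℝ}
    (w : ℝ → EuclideanSpace ℝ (Fin n))
    (hw : ContinuousOn w (Icc a₀ b₀)) (hinj : InjOn w (Icc a₀ b₀))
    {α : ℝ} (hα : α ∈ Icc (1 : ℝ) (n : ℝ))
    (hfin : ∀ t ∈ Icc a₀ b₀, massFn α w a₀ t ≠ ⊤)
    (hS : StrictMonoOn (SF α w a₀) (Icc a₀ b₀))
    (J : EuclideanSpace ℝ (Fin n) → ℝ)
    (hJ : ∀ t ∈ Icc a₀ b₀, J (w t) = SF α w a₀ t)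
    (h : EuclideanSpace ℝ (Fin n) → ℝ)
    (Dh : ℕ → EuclideanSpace ℝ (Fin n) → ℝ) (hDh0 : Dh 0 = h)
    (hDh : ∀ k : ℕ, ∀ θ ∈ w '' Icc a₀ b₀,
      HasFAlphaDerivAt (w '' Icc a₀ b₀) J (Dh k) θ (Dh (k + 1) θ))
    (hbdd : ∀ k : ℕ, ∃ M, ∀ θ ∈ w '' Icc a₀ b₀, |Dh k θ| ≤ M)
    {a b : ℝ} (ha : a₀ ≤ a) (hab : a ≤ b) (hb : b ≤ b₀)
    (g : ℝ → ℝ) (hg : ∀ t ∈ Icc a₀ b₀, g (SF α w a₀ t) = h (w t))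
    (hTaylor : ∀ u ∈ Icc (SF α w a₀ a) (SF α w a₀ b),
      ∀ y ∈ Icc (SF α w a₀ a) (SF α w a₀ b),
        HasSum (fun k : ℕ =>
          (u - y) ^ k / (Nat.factorial k : ℝ) * iteratedDeriv k g y) (g u)) :
    ∀ θ ∈ w '' Icc a b, ∀ θ' ∈ w '' Icc a b,
      HasSum (fun k : ℕ =>
        (J θ - J θ') ^ k / (Nat.factorial k : ℝ) * Dh k θ') (h θ) := by
  intro θ hθ θ' hθ'
  obtain ⟨t, ht, rfl⟩ := hθ
  obtain ⟨s, hs, rfl⟩ := hθ'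
  have hα1 : (1:ℝ) ≤ α := hα.1
  have hα0 : (0:ℝ) ≤ α := by linarith
  have hΓ : 0 < Real.Gamma (α + 1) := Real.Gamma_pos_of_pos (by linarith)
  have hab₀ : a₀ ≤ b₀ := le_trans ha (le_trans hab hb)
  have htI₀ : t ∈ Icc a₀ b₀ := ⟨le_trans ha ht.1, le_trans ht.2 hb⟩
  have hsI₀ : s ∈ Icc a₀ b₀ := ⟨le_trans ha hs.1, le_trans hs.2 hb⟩
  rw [hJ t htI₀, hJ s hsI₀]
  rcases eq_or_lt_of_le hab with heq|hab'
  · -- degenerate case a = b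
    have hta : t = a := le_antisymm (by rw [heq]; exact ht.2) ht.1
    have hsa : s = a := le_antisymm (by rw [heq]; exact hs.2) hs.1
    have hst : s = t := hsa.trans hta.symm
    rw [hst, hta]
    have hamem : SF α w a₀ a ∈ Icc (SF α w a₀ a) (SF α w a₀ b) := ⟨le_rfl, by rw [← heq]⟩
    have haI : a ∈ Icc a₀ b₀ := ⟨ha, le_trans hab hb⟩
    have hT := hTaylor (SF α w a₀ a) hamem (SF α w a₀ a) hamem
    rw [hg a haI] at hT
    have hfun : (fun k : ℕ => (SF α w a₀ a - SF α w a₀ a) ^ k / (Nat.factorial k : ℝ) *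
        iteratedDeriv k g (SF α w a₀ a)) = fun k : ℕ =>
        (SF α w a₀ a - SF α w a₀ a) ^ k / (Nat.factorial k : ℝ) * Dh k (w a) := by
      funext k
      cases k with
      | zero =>
        simp only [pow_zero, Nat.factorial_zero, Nat.cast_one, iteratedDeriv_zero, hDh0]
        rw [hg a haI]
      | succ k =>
        simp [sub_self, zero_pow]
    rw [hfun] at hT
    exact hT
  · -- main case a < b
    have haI : a ∈ Icc a₀ b₀ := ⟨ha, le_trans hab hb⟩
    have hbI : b ∈ Icc a₀ b₀ := ⟨le_trans ha hab, hb⟩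
    have hmemab : ∀ r, r ∈ Icc a b → r ∈ Icc a₀ b₀ := fun r hr =>
      ⟨le_trans ha hr.1, le_trans hr.2 hb⟩
    have hmono : MonotoneOn (SF α w a₀) (Icc a₀ b₀) := hS.monotoneOn
    have hL : SF α w a₀ a < SF α w a₀ b := hS haI hbI hab'
    set ua := SF α w a₀ a with huadef
    set ub := SF α w a₀ b with hubdef
    have hLpos : 0 < ub - ua := by linarith
    have huaI : ua ∈ Icc ua ub := ⟨le_rfl, hL.le⟩
    have hubI : ub ∈ Icc ua ub := ⟨hL.le, le_rfl⟩
    have hSmem : ∀ r ∈ Icc a b, SF α w a₀ r ∈ Icc ua ub := fun r hr =>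
      ⟨hmono haI (hmemab r hr) hr.1, hmono (hmemab r hr) hbI hr.2⟩
    obtain ⟨C₁, hC₁⟩ := bounded_of_summable (hTaylor ub hubI ua huaI).summable
    obtain ⟨C₂, hC₂⟩ := bounded_of_summable (hTaylor ua huaI ub hubI).summable
    have hq1 : Sml (fun k => iteratedDeriv k g ua / (Nat.factorial k : ℝ)) (ub - ua) := by
      apply sml_of_bound (C := C₁)
      intro k
      have hCk := hC₁ k
      have heq : |(ub - ua) ^ k / (Nat.factorial k : ℝ) * iteratedDeriv k g ua|
          = |iteratedDeriv k g ua / (Nat.factorial k : ℝ)| * (ub - ua) ^ k := by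
        rw [abs_mul, abs_div, abs_div, abs_pow, abs_of_nonneg hLpos.le, Nat.abs_cast]
        ring
      rw [← heq]
      exact hCk
    have hq2 : Sml (fun k => iteratedDeriv k g ub / (Nat.factorial k : ℝ)) (ub - ua) := by
      apply sml_of_bound (C := C₂)
      intro k
      have hCk := hC₂ k
      have heq : |(ua - ub) ^ k / (Nat.factorial k : ℝ) * iteratedDeriv k g ub|
          = |iteratedDeriv k g ub / (Nat.factorial k : ℝ)| * (ub - ua) ^ k := by
        rw [abs_mul, abs_div, abs_div, abs_pow, abs_sub_comm ua ub,
          abs_of_nonneg hLpos.le, Nat.abs_cast]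
        ring
      rw [← heq]
      exact hCk
    set A : ℝ → ℝ := fun x => if x < ub then
        (∑' k, (iteratedDeriv k g ua / (Nat.factorial k : ℝ)) * (x - ua) ^ k)
      else (∑' k, (iteratedDeriv k g ub / (Nat.factorial k : ℝ)) * (x - ub) ^ k) with hAdef
    have hA1g : ∀ x ∈ Icc ua ub,
        (∑' k, (iteratedDeriv k g ua / (Nat.factorial k : ℝ)) * (x - ua) ^ k) = g x := by
      intro x hx
      rw [← (hTaylor x hx ua huaI).tsum_eq]
      exact tsum_congr fun k => by ring
    have hA2g : ∀ x ∈ Icc ua ub,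
        (∑' k, (iteratedDeriv k g ub / (Nat.factorial k : ℝ)) * (x - ub) ^ k) = g x := by
      intro x hx
      rw [← (hTaylor x hx ub hubI).tsum_eq]
      exact tsum_congr fun k => by ring
    have hAg : ∀ x ∈ Icc ua ub, A x = g x := by
      intro x hx
      rw [hAdef]
      by_cases hxx : x < ub
      · simp only [if_pos hxx]
        exact hA1g x hx
      · simp only [if_neg hxx]
        exact hA2g x hx
    have hAeq1 : ∀ x ∈ Iio ub, A x =
        (∑' k, (iteratedDeriv k g ua / (Nat.factorial k : ℝ)) * (x - ua) ^ k) := by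
      intro x hx
      rw [hAdef]
      exact if_pos hx
    have hAeq2 : ∀ x ∈ Ioi ua, A x =
        (∑' k, (iteratedDeriv k g ub / (Nat.factorial k : ℝ)) * (x - ub) ^ k) := by
      intro x hx
      by_cases hxx : x < ub
      · rw [hAdef]
        simp only [if_pos hxx]
        rw [hA1g x ⟨le_of_lt hx, hxx.le⟩, ← hA2g x ⟨le_of_lt hx, hxx.le⟩]
      · rw [hAdef]
        simp only [if_neg hxx]
    have hDA : ∀ k, ∀ y ∈ Icc ua ub,
        HasDerivAt (iteratedDeriv k A) (iteratedDeriv (k + 1) A y) y := by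
      intro k y hy
      rcases le_or_gt y ((ua + ub) / 2) with hy2|hy2
      · have hev : A =ᶠ[𝓝 y]
            (fun x => ∑' m, (iteratedDeriv m g ua / (Nat.factorial m : ℝ)) * (x - ua) ^ m) := by
          filter_upwards [Iio_mem_nhds (show y < ub by linarith [hy.1])] with x hx
          exact hAeq1 x hx
        have h1 : |y - ua| < ub - ua := by
          rw [abs_of_nonneg (by linarith [hy.1])]
          linarith [hy.1]
        have hps : HasDerivAt (iteratedDeriv k
              (fun x => ∑' m, (iteratedDeriv m g ua / (Nat.factorial m : ℝ)) * (x - ua) ^ m))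
            (iteratedDeriv (k + 1)
              (fun x => ∑' m, (iteratedDeriv m g ua / (Nat.factorial m : ℝ)) * (x - ua) ^ m) y) y :=
          ps_hasDerivAt_iter hq1 k h1
        have hevk := eventuallyEq_iteratedDeriv hev k
        have hevk1 := eventuallyEq_iteratedDeriv hev (k + 1)
        rw [hevk1.eq_of_nhds]
        exact hps.congr_of_eventuallyEq hevk
      · have hev : A =ᶠ[𝓝 y]
            (fun x => ∑' m, (iteratedDeriv m g ub / (Nat.factorial m : ℝ)) * (x - ub) ^ m) := by
          filter_upwards [Ioi_mem_nhds (show ua < y by linarith)] with x hx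
          exact hAeq2 x hx
        have h1 : |y - ub| < ub - ua := by
          rw [abs_of_nonpos (by linarith [hy.2])]
          linarith [hy.2]
        have hps : HasDerivAt (iteratedDeriv k
              (fun x => ∑' m, (iteratedDeriv m g ub / (Nat.factorial m : ℝ)) * (x - ub) ^ m))
            (iteratedDeriv (k + 1)
              (fun x => ∑' m, (iteratedDeriv m g ub / (Nat.factorial m : ℝ)) * (x - ub) ^ m) y) y :=
          ps_hasDerivAt_iter hq2 k h1
        have hevk := eventuallyEq_iteratedDeriv hev k
        have hevk1 := eventuallyEq_iteratedDeriv hev (k + 1)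
        rw [hevk1.eq_of_nhds]
        exact hps.congr_of_eventuallyEq hevk
    have hkey : ∀ y ∈ Icc ua ub, ∀ k, iteratedDeriv k A y = iteratedDeriv k g y := by
      intro y hy k
      rcases eq_or_lt_of_le hy.1 with h1|h1
      · rw [← h1]
        have hev : A =ᶠ[𝓝 ua]
            (fun x => ∑' m, (iteratedDeriv m g ua / (Nat.factorial m : ℝ)) * (x - ua) ^ m) := by
          filter_upwards [Iio_mem_nhds hL] with x hx
          exact hAeq1 x hx
        have hc : iteratedDeriv k
              (fun x => ∑' m, (iteratedDeriv m g ua / (Nat.factorial m : ℝ)) * (x - ua) ^ m) ua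
            = (Nat.factorial k : ℝ) * (iteratedDeriv k g ua / (Nat.factorial k : ℝ)) :=
          ps_center hq1 hLpos k
        rw [(eventuallyEq_iteratedDeriv hev k).eq_of_nhds, hc]
        have hkne : (Nat.factorial k : ℝ) ≠ 0 := by exact_mod_cast k.factorial_ne_zero
        field_simp
      · rcases eq_or_lt_of_le hy.2 with h2|h2
        · rw [h2]
          have hev : A =ᶠ[𝓝 ub]
              (fun x => ∑' m, (iteratedDeriv m g ub / (Nat.factorial m : ℝ)) * (x - ub) ^ m) := by
            filter_upwards [Ioi_mem_nhds hL] with x hx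
            exact hAeq2 x hx
          have hc : iteratedDeriv k
                (fun x => ∑' m, (iteratedDeriv m g ub / (Nat.factorial m : ℝ)) * (x - ub) ^ m) ub
              = (Nat.factorial k : ℝ) * (iteratedDeriv k g ub / (Nat.factorial k : ℝ)) :=
            ps_center hq2 hLpos k
          rw [(eventuallyEq_iteratedDeriv hev k).eq_of_nhds, hc]
          have hkne : (Nat.factorial k : ℝ) ≠ 0 := by exact_mod_cast k.factorial_ne_zero
          field_simp
        · have hev : g =ᶠ[𝓝 y] A := by
            filter_upwards [Ioo_mem_nhds h1 h2] with x hx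
            exact (hAg x ⟨hx.1.le, hx.2.le⟩).symm
          exact ((eventuallyEq_iteratedDeriv hev k).eq_of_nhds).symm
    have hDh_eq : ∀ k, ∀ r ∈ Icc a b, Dh k (w r) = iteratedDeriv k A (SF α w a₀ r) := by
      intro k
      induction k with
      | zero =>
        intro r hr
        rw [hDh0, iteratedDeriv_zero, hAg _ (hSmem r hr), hg r (hmemab r hr)]
      | succ k ih =>
        intro r hr
        have hrI := hmemab r hr
        have hF := hDh k (w r) ⟨r, hrI, rfl⟩
        obtain ⟨u, hu1, hu2, hu3⟩ :=
          exists_approach_seq hΓ hα0 hα1 hw hfin hmono ha hab' hb hr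
        have hwcont : Tendsto (fun j => w (u j)) atTop (𝓝 (w r)) := by
          refine (hw r hrI).tendsto.comp (tendsto_nhdsWithin_iff.mpr ⟨hu2, ?_⟩)
          exact Filter.Eventually.of_forall fun j => hmemab _ (hu1 j).1
        have hlim1 : Tendsto (fun j => (Dh k (w (u j)) - Dh k (w r)) / (J (w (u j)) - J (w r)))
            atTop (𝓝 (Dh (k + 1) (w r))) := by
          rw [Metric.tendsto_atTop]
          intro ε hε
          obtain ⟨δ, hδ, hδ'⟩ := hF ε hε
          obtain ⟨N, hN⟩ := Metric.tendsto_atTop.mp hwcont δ hδ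
          refine ⟨N, fun j hj => ?_⟩
          rw [Real.dist_eq]
          refine hδ' (w (u j)) ⟨u j, hmemab _ (hu1 j).1, rfl⟩ ?_ ?_
          · intro hweq
            exact (hu1 j).2 (hinj (hmemab _ (hu1 j).1) hrI hweq)
          · rw [← dist_eq_norm]
            exact hN j hj
        have hder := hDA k (SF α w a₀ r) (hSmem r hr)
        have hslope := hasDerivAt_iff_tendsto_slope.mp hder
        have hSne : ∀ j, SF α w a₀ (u j) ≠ SF α w a₀ r := fun j heq =>
          (hu1 j).2 (hS.injOn (hmemab _ (hu1 j).1) hrI heq)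
        have hcomp : Tendsto (fun j => SF α w a₀ (u j)) atTop (𝓝[≠] (SF α w a₀ r)) :=
          tendsto_nhdsWithin_iff.mpr ⟨hu3, Filter.Eventually.of_forall hSne⟩
        have hlim2 : Tendsto (fun j => (Dh k (w (u j)) - Dh k (w r)) / (J (w (u j)) - J (w r)))
            atTop (𝓝 (iteratedDeriv (k + 1) A (SF α w a₀ r))) := by
          refine Tendsto.congr (fun j => ?_) (hslope.comp hcomp)
          show slope (iteratedDeriv k A) (SF α w a₀ r) (SF α w a₀ (u j)) = _
          rw [slope_def_field, hJ (u j) (hmemab _ (hu1 j).1), hJ r hrI,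
            ih (u j) (hu1 j).1, ih r hr]
        exact tendsto_nhds_unique hlim1 hlim2
    have hT := hTaylor (SF α w a₀ t) (hSmem t ht) (SF α w a₀ s) (hSmem s hs)
    rw [hg t htI₀] at hT
    have hfun : (fun k : ℕ => (SF α w a₀ t - SF α w a₀ s) ^ k / (Nat.factorial k : ℝ) *
        iteratedDeriv k g (SF α w a₀ s)) = fun k : ℕ =>
        (SF α w a₀ t - SF α w a₀ s) ^ k / (Nat.factorial k : ℝ) * Dh k (w s) := by
      funext k
      rw [hDh_eq k s hs, hkey (SF α w a₀ s) (hSmem s hs) k]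
    rw [hfun] at hT
    exact hT
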